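/- arXiv:1107.4876 — 2 statements merged into one kernel-verified Lean document; each statement's English description precedes it below -/
import Mathlib

section
/- Let f(z) = λz + a_2 z² + a_3 z³ + ⋯ be a formal power series over ℂ with λ not equal to 0 and not a root of unity, and with no resonances in the one-dimensional sense (λ^k ≠ λ for all k ≥ 2). Then there exists a unique formal power series φ(z) = z + c_2 z² + c_3 z³ + ⋯ such that φ(f(z)) = λ φ(z) as formal power series. (Formal linearizability of one-dimensional germs with multiplier not a root of unity.) -/
open PowerSeries

/-- Composition `φ ∘ f` of one-variable formal power series (for `f` without constant
term), defined coefficientwise via truncation of `φ` and evaluation at `f`. -/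
noncomputable def psComp (φ f : PowerSeries ℂ) : PowerSeries ℂ :=
  PowerSeries.mk fun n =>
    PowerSeries.coeff n (Polynomial.aeval f (PowerSeries.trunc (n + 1) φ))

open Finset

lemma coeff_psComp (φ f : PowerSeries ℂ) (n : ℕ) :
    PowerSeries.coeff n (psComp φ f)
      = ∑ k ∈ range (n + 1), PowerSeries.coeff k φ * PowerSeries.coeff n (f ^ k) := by
  have hdeg : (PowerSeries.trunc (n + 1) φ).natDegree < n + 1 := by
    by_cases h : PowerSeries.trunc (n + 1) φ = 0
    · simp [h]
    · exact (Polynomial.natDegree_lt_iff_degree_lt h).mpr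
        (by exact_mod_cast PowerSeries.degree_trunc_lt φ (n + 1))
  rw [psComp, PowerSeries.coeff_mk, Polynomial.aeval_eq_sum_range' hdeg, map_sum]
  refine Finset.sum_congr rfl fun k hk => ?_
  rw [PowerSeries.coeff_trunc, if_pos (Finset.mem_range.mp hk)]
  simp [smul_eq_mul]

lemma coeff_pow_eq_zero (f : PowerSeries ℂ) (hf0 : PowerSeries.constantCoeff f = 0)
    (n k : ℕ) (h : n < k) : PowerSeries.coeff n (f ^ k) = 0 := by
  have hX : (PowerSeries.X : PowerSeries ℂ) ∣ f := PowerSeries.X_dvd_iff.mpr hf0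
  exact PowerSeries.X_pow_dvd_iff.mp (pow_dvd_pow_of_dvd hX k) n h

lemma coeff_pow_self (f : PowerSeries ℂ) (hf0 : PowerSeries.constantCoeff f = 0)
    (n : ℕ) : PowerSeries.coeff n (f ^ n) = (PowerSeries.coeff 1 f) ^ n := by
  obtain ⟨g, hg⟩ := PowerSeries.X_dvd_iff.mpr hf0
  have h1 : PowerSeries.coeff 1 f = PowerSeries.constantCoeff g := by
    rw [hg]; simp [PowerSeries.coeff_X_pow_mul g 1 0]
  rw [h1, hg, mul_pow]
  have h2 := PowerSeries.coeff_X_pow_mul (g ^ n) n 0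
  rw [zero_add] at h2
  rw [h2, PowerSeries.coeff_zero_eq_constantCoeff, map_pow]

noncomputable def linC (f : PowerSeries ℂ) (l : ℂ) : ℕ → ℂ := fun n =>
  Nat.strongRec (motive := fun _ => ℂ) (fun n ih =>
    if n = 0 then 0 else if n = 1 then 1
    else (∑ k ∈ (Finset.range n).attach,
        ih k (Finset.mem_range.mp k.2) * PowerSeries.coeff n (f ^ (k : ℕ))) / (l - l ^ n)) n

lemma linC_zero (f : PowerSeries ℂ) (l : ℂ) : linC f l 0 = 0 := by
  rw [linC, Nat.strongRecOn'_beta]; simp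

lemma linC_one (f : PowerSeries ℂ) (l : ℂ) : linC f l 1 = 1 := by
  rw [linC, Nat.strongRecOn'_beta]; simp

lemma linC_eq (f : PowerSeries ℂ) (l : ℂ) (n : ℕ) (hn : 2 ≤ n) :
    linC f l n = (∑ k ∈ Finset.range n,
        linC f l k * PowerSeries.coeff n (f ^ k)) / (l - l ^ n) := by
  conv_lhs => rw [linC, Nat.strongRecOn'_beta]
  rw [if_neg (by omega), if_neg (by omega)]
  congr 1
  rw [← Finset.sum_attach (Finset.range n) (fun k => linC f l k * PowerSeries.coeff n (f ^ k))]
  rfl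

lemma linC_spec (f : PowerSeries ℂ) (l : ℂ)
    (hf0 : PowerSeries.constantCoeff f = 0) (hf1 : PowerSeries.coeff 1 f = l)
    (hres : ∀ k : ℕ, 2 ≤ k → l ^ k ≠ l) (n : ℕ) :
    ∑ k ∈ range (n + 1), linC f l k * PowerSeries.coeff n (f ^ k) = l * linC f l n := by
  match n with
  | 0 => simp [linC_zero]
  | 1 => simp [Finset.sum_range_succ, linC_zero, linC_one, hf1]
  | (m + 2) =>
    set n := m + 2 with hn
    have hd : l - l ^ n ≠ 0 := sub_ne_zero.mpr (Ne.symm (hres n (by omega)))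
    have hcs : PowerSeries.coeff n (f ^ n) = l ^ n := by
      rw [coeff_pow_self f hf0, hf1]
    rw [Finset.sum_range_succ, hcs, linC_eq f l n (by omega)]
    set S := ∑ k ∈ Finset.range n, linC f l k * PowerSeries.coeff n (f ^ k) with hS
    field_simp
    ring

lemma coeff_eq_linC (f : PowerSeries ℂ) (l : ℂ)
    (hf0 : PowerSeries.constantCoeff f = 0) (hf1 : PowerSeries.coeff 1 f = l)
    (hres : ∀ k : ℕ, 2 ≤ k → l ^ k ≠ l) (φ : PowerSeries ℂ)
    (h0 : PowerSeries.constantCoeff φ = 0) (h1 : PowerSeries.coeff 1 φ = 1)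
    (hc : psComp φ f = l • φ) (n : ℕ) : PowerSeries.coeff n φ = linC f l n := by
  induction n using Nat.strong_induction_on with
  | _ n ih =>
    match n with
    | 0 => simpa [linC_zero] using h0
    | 1 => rw [h1, linC_one]
    | (m + 2) =>
      set n := m + 2 with hn
      have heq : ∑ k ∈ range (n + 1), PowerSeries.coeff k φ * PowerSeries.coeff n (f ^ k)
          = l * PowerSeries.coeff n φ := by
        have := congrArg (PowerSeries.coeff n) hc
        rwa [coeff_psComp, map_smul, smul_eq_mul] at this
      rw [Finset.sum_range_succ] at heq
      have hcs : PowerSeries.coeff n (f ^ n) = l ^ n := by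
        rw [coeff_pow_self f hf0, hf1]
      rw [hcs] at heq
      have hsum : ∑ k ∈ Finset.range n, PowerSeries.coeff k φ * PowerSeries.coeff n (f ^ k)
          = ∑ k ∈ Finset.range n, linC f l k * PowerSeries.coeff n (f ^ k) :=
        Finset.sum_congr rfl fun k hk => by rw [ih k (Finset.mem_range.mp hk)]
      rw [hsum] at heq
      have hd : l - l ^ n ≠ 0 := sub_ne_zero.mpr (Ne.symm (hres n (by omega)))
      rw [linC_eq f l n (by omega), eq_div_iff hd]
      linear_combination -heq

/-- If `f(z) = λz + a₂z² + ⋯` is a formal power series with `λ ≠ 0` and `λ^k ≠ λ` for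
all `k ≥ 2` (no one-dimensional resonances), then there is a unique formal power series
`φ(z) = z + c₂z² + ⋯` with `φ ∘ f = λ·φ`. -/
theorem formal_linearization_exists_unique (f : PowerSeries ℂ) (l : ℂ)
    (hf0 : PowerSeries.constantCoeff f = 0) (hf1 : PowerSeries.coeff 1 f = l)
    (hl0 : l ≠ 0) (hres : ∀ k : ℕ, 2 ≤ k → l ^ k ≠ l) :
    ∃! φ : PowerSeries ℂ, PowerSeries.constantCoeff φ = 0 ∧
      PowerSeries.coeff 1 φ = 1 ∧ psComp φ f = l • φ := by
  refine ⟨PowerSeries.mk (linC f l), ⟨?_, ?_, ?_⟩, ?_⟩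
  · rw [← PowerSeries.coeff_zero_eq_constantCoeff_apply, PowerSeries.coeff_mk, linC_zero]
  · rw [PowerSeries.coeff_mk, linC_one]
  · ext n
    rw [coeff_psComp, map_smul, smul_eq_mul, PowerSeries.coeff_mk]
    simpa [PowerSeries.coeff_mk] using linC_spec f l hf0 hf1 hres n
  · rintro ψ ⟨h0, h1, hc⟩
    ext n
    rw [PowerSeries.coeff_mk]
    exact coeff_eq_linC f l hf0 hf1 hres ψ h0 h1 hc n
end

section
/- Let λ₁, …, λ_n ∈ ℂ* and suppose the n-tuple (λ₁,…,λ_n) has no resonances, i.e., for all multi-indices (k₁,…,k_n) ∈ ℕ^n with k₁+⋯+k_n ≥ 2 and all 1 ≤ j ≤ n, λ₁^{k₁}⋯λ_n^{k_n} ≠ λ_j. Then any formal germ f: (ℂ^n,0) → (ℂ^n,0) with diagonal linear part diag(λ₁,…,λ_n) is formally linearizable: there exists a formal power series map φ with identity linear part such that φ∘f = (dφ₀-linear map)∘φ where the linear map is diag(λ₁,…,λ_n). -/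
/-- Composition `φ ∘ f` of a multivariate formal power series `φ` with an `n`-tuple `f`
of power series without constant term, defined coefficientwise via truncation. -/
noncomputable def germComp {n : ℕ} (φ : MvPowerSeries (Fin n) ℂ)
    (f : Fin n → MvPowerSeries (Fin n) ℂ) : MvPowerSeries (Fin n) ℂ :=
  fun d => MvPowerSeries.coeff (R := ℂ) d
    (MvPolynomial.aeval f
      (MvPowerSeries.trunc ℂ (Finsupp.equivFunOnFinite.symm fun _ => d.sum (fun _ v => v) + 1) φ))

noncomputable section
namespace FLinAux

variable {n : ℕ}

/-- total degree of a multi-index -/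
def deg (d : Fin n →₀ ℕ) : ℕ := ∑ i, d i

lemma deg_sum (d : Fin n →₀ ℕ) : d.sum (fun _ v => v) = deg d :=
  Finsupp.sum_fintype _ _ (fun _ => rfl)

lemma deg_add (a b : Fin n →₀ ℕ) : deg (a + b) = deg a + deg b := by
  simp [deg, Finset.sum_add_distrib]

lemma apply_le_deg (d : Fin n →₀ ℕ) (i : Fin n) : d i ≤ deg d :=
  Finset.single_le_sum (fun _ _ => Nat.zero_le _) (Finset.mem_univ i)

lemma deg_eq_zero {d : Fin n →₀ ℕ} (h : deg d = 0) : d = 0 := by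
  ext i
  have := apply_le_deg d i
  simp only [Finsupp.coe_zero, Pi.zero_apply]
  omega

lemma deg_zero : deg (0 : Fin n →₀ ℕ) = 0 := by simp [deg]

lemma deg_single (i : Fin n) (k : ℕ) : deg (Finsupp.single i k) = k := by
  simp [deg, Finsupp.single_apply]

lemma deg_eq_one {d : Fin n →₀ ℕ} (h : deg d = 1) : ∃ i, d = Finsupp.single i 1 := by
  have hd0 : d ≠ 0 := by
    intro h0; rw [h0] at h; simp [deg] at h
  obtain ⟨a, ha⟩ : ∃ a, d a ≠ 0 := by
    by_contra hc
    push_neg at hc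
    exact hd0 (by ext i; simpa using hc i)
  refine ⟨a, ?_⟩
  have h1 : d a = 1 := by
    have := apply_le_deg d a; omega
  ext i
  rcases eq_or_ne i a with rfl | hia
  · simp [h1]
  · have hsum : d i + d a ≤ deg d := by
      calc d i + d a = ∑ k ∈ ({i, a} : Finset (Fin n)), d k := by
            rw [Finset.sum_pair hia]
        _ ≤ deg d := Finset.sum_le_sum_of_subset (Finset.subset_univ _)
    have : d i = 0 := by omega
    simp [this, Finsupp.single_apply, Ne.symm hia]

variable (l : Fin n → ℂ)

/-- `λ^d` -/
def lam (d : Fin n →₀ ℕ) : ℂ := ∏ i, l i ^ d i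

lemma lam_add (a b : Fin n →₀ ℕ) : lam l (a + b) = lam l a * lam l b := by
  simp [lam, pow_add, Finset.prod_mul_distrib]

lemma lam_single (j : Fin n) : lam l (Finsupp.single j 1) = l j := by
  rw [lam, Finset.prod_eq_single j]
  · simp
  · intro b _ hb; simp [Finsupp.single_apply, Ne.symm hb]
  · intro h; exact absurd (Finset.mem_univ j) h

lemma lam_zero : lam l 0 = 1 := by simp [lam]

variable (f : Fin n → MvPowerSeries (Fin n) ℂ)

lemma exists_decomp (m : Fin n →₀ ℕ) (hm : m ≠ 0) :
    ∃ (a : Fin n) (m' : Fin n →₀ ℕ), Finsupp.single a 1 + m' = m := by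
  obtain ⟨a, ha⟩ : ∃ a, m a ≠ 0 := by
    by_contra hc
    push_neg at hc
    exact hm (by ext i; simpa using hc i)
  refine ⟨a, m - Finsupp.single a 1, ?_⟩
  ext i
  rcases eq_or_ne i a with rfl | h
  · simp [Finsupp.single_apply]; omega
  · simp [Finsupp.single_apply, Ne.symm h]

lemma prod_pow_decomp (m m' : Fin n →₀ ℕ) (a : Fin n)
    (h : Finsupp.single a 1 + m' = m) :
    (∏ i, f i ^ m i) = f a * ∏ i, f i ^ m' i := by
  have key : ∀ i, m i = m' i + (Finsupp.single a 1) i := by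
    intro i
    rw [← h]
    simp [Finsupp.single_apply]
    rcases eq_or_ne a i with rfl | hh
    · simp [add_comm]
    · simp [hh]
  calc (∏ i, f i ^ m i)
      = ∏ i, (f i ^ m' i * f i ^ (Finsupp.single a 1) i) := by
        refine Finset.prod_congr rfl fun i _ => ?_
        rw [← pow_add, ← key]
    _ = (∏ i, f i ^ m' i) * ∏ i, f i ^ (Finsupp.single a 1) i := by
        rw [Finset.prod_mul_distrib]
    _ = f a * ∏ i, f i ^ m' i := by
        rw [mul_comm]
        congr 1
        rw [Finset.prod_eq_single a]
        · simp
        · intro b _ hb; simp [Finsupp.single_apply, Ne.symm hb]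
        · intro hh; exact absurd (Finset.mem_univ a) hh

variable (hf0 : ∀ j, MvPowerSeries.constantCoeff (σ := Fin n) (R := ℂ) (f j) = 0)
variable (hflin : ∀ i j : Fin n, MvPowerSeries.coeff (R := ℂ) (Finsupp.single i 1) (f j)
      = if i = j then l j else 0)

include hf0 hflin in
/-- Key lemma: coefficient of the product `f^m` in degrees `≤ |m|`. -/
lemma coeff_prod_pow : ∀ (k : ℕ) (m d : Fin n →₀ ℕ), deg m ≤ k → deg d ≤ deg m →
    MvPowerSeries.coeff (R := ℂ) d (∏ i, f i ^ m i) = if d = m then lam l m else 0 := by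
  intro k
  induction k with
  | zero =>
    intro m d hk hd
    have hm : m = 0 := deg_eq_zero (Nat.le_zero.mp hk)
    subst hm
    have hd0 : d = 0 := deg_eq_zero (by have := deg_zero (n := n); omega)
    subst hd0
    simp [MvPowerSeries.coeff_one, lam_zero]
  | succ k ih =>
    intro m d hk hd
    rcases eq_or_ne m 0 with rfl | hm0
    · have hd0 : d = 0 := deg_eq_zero (by have := deg_zero (n := n); omega)
      subst hd0
      simp [MvPowerSeries.coeff_one, lam_zero]
    · obtain ⟨a, m', hsum⟩ := exists_decomp m hm0
      have hdegm : deg m = 1 + deg m' := by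
        rw [← hsum, deg_add, deg_single]
      rw [prod_pow_decomp f m m' a hsum, MvPowerSeries.coeff_mul]
      have hm'k : deg m' ≤ k := by omega
      have key : ∀ p ∈ Finset.HasAntidiagonal.antidiagonal d,
          MvPowerSeries.coeff (R := ℂ) p.1 (f a) * MvPowerSeries.coeff (R := ℂ) p.2 (∏ i, f i ^ m' i)
          = if p = (Finsupp.single a 1, m') then l a * lam l m' else 0 := by
        rintro ⟨u, v⟩ hp
        simp only [Finset.HasAntidiagonal.mem_antidiagonal] at hp
        have hdegs : deg u + deg v = deg d := by rw [← hp, deg_add]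
        rcases Nat.lt_or_ge (deg u) 2 with h2 | h2
        · interval_cases hdu : deg u
          · -- deg u = 0
            have hu0 : u = 0 := deg_eq_zero hdu
            subst hu0
            have hc0 : MvPowerSeries.coeff (R := ℂ) 0 (f a) = 0 := by
              rw [MvPowerSeries.coeff_zero_eq_constantCoeff]; exact hf0 a
            rw [hc0, zero_mul]
            have hne : (0 : Fin n →₀ ℕ) ≠ Finsupp.single a 1 :=
              fun h => one_ne_zero (Finsupp.single_eq_zero.mp h.symm)
            simp [Prod.ext_iff, hne]
          · -- deg u = 1
            obtain ⟨i, rfl⟩ := deg_eq_one hdu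
            rw [hflin i a]
            rcases eq_or_ne i a with rfl | hia
            · rw [if_pos rfl]
              have hv : deg v ≤ deg m' := by omega
              rw [ih m' v hm'k hv]
              rcases eq_or_ne v m' with rfl | hvm
              · simp
              · simp [Prod.ext_iff, hvm]
            · rw [if_neg hia, zero_mul]
              have hne : Finsupp.single i 1 ≠ Finsupp.single a 1 := by
                simp [Finsupp.single_left_inj (one_ne_zero (α := ℕ)), hia]
              simp [Prod.ext_iff, hne]
        · -- deg u ≥ 2
          have hvlt : deg v < deg m' := by omega
          rw [ih m' v hm'k (le_of_lt hvlt), if_neg (by rintro rfl; omega), mul_zero]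
          have hvm : v ≠ m' := by rintro rfl; omega
          simp [Prod.ext_iff, hvm]
      rw [Finset.sum_congr rfl key, Finset.sum_ite_eq' (Finset.HasAntidiagonal.antidiagonal d)]
      simp only [Finset.HasAntidiagonal.mem_antidiagonal]
      have hlam : lam l m = l a * lam l m' := by
        rw [← hsum, lam_add, lam_single]
      rcases eq_or_ne d m with rfl | hdm
      · rw [if_pos hsum, if_pos rfl, hlam]
      · rw [if_neg (by rw [hsum]; exact fun h => hdm h.symm), if_neg hdm]

lemma germComp_coeff (φ : MvPowerSeries (Fin n) ℂ) (d : Fin n →₀ ℕ) :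
    MvPowerSeries.coeff (R := ℂ) d (germComp φ f) =
      ∑ m ∈ Finset.Iio (Finsupp.equivFunOnFinite.symm fun _ : Fin n => deg d + 1),
        MvPowerSeries.coeff (R := ℂ) m φ * MvPowerSeries.coeff (R := ℂ) d (∏ i, f i ^ m i) := by
  rw [MvPowerSeries.coeff_apply]
  have h0 : germComp φ f d
      = MvPowerSeries.coeff (R := ℂ) d (MvPolynomial.aeval f
          (MvPowerSeries.trunc ℂ
            (Finsupp.equivFunOnFinite.symm fun _ => d.sum (fun _ v => v) + 1) φ)) := rfl
  rw [h0, deg_sum]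
  have h1 : MvPowerSeries.trunc ℂ
        (Finsupp.equivFunOnFinite.symm fun _ : Fin n => deg d + 1) φ
      = ∑ m ∈ Finset.Iio (Finsupp.equivFunOnFinite.symm fun _ : Fin n => deg d + 1),
          MvPolynomial.monomial m (MvPowerSeries.coeff (R := ℂ) m φ) := rfl
  rw [h1, map_sum, map_sum]
  refine Finset.sum_congr rfl fun m _ => ?_
  rw [MvPolynomial.aeval_monomial]
  have h2 : (algebraMap ℂ (MvPowerSeries (Fin n) ℂ)) (MvPowerSeries.coeff (R := ℂ) m φ)
      = MvPowerSeries.C (σ := Fin n) (R := ℂ) (MvPowerSeries.coeff (R := ℂ) m φ) := rfl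
  rw [h2, MvPowerSeries.coeff_C_mul]
  congr 1
  exact congrArg _ (Finsupp.prod_fintype _ _ (fun i => pow_zero (f i)))

/-- Coefficients of the linearizing map, constructed by recursion on total degree. -/
noncomputable def c (l : Fin n → ℂ) (f : Fin n → MvPowerSeries (Fin n) ℂ) (j : Fin n) :
    (Fin n →₀ ℕ) → ℂ
  | d =>
    if 2 ≤ deg d then
      (∑ m ∈ ((Finset.Iic (Finsupp.equivFunOnFinite.symm fun _ : Fin n => deg d)).filter
          fun m => deg m < deg d).attach,
        c l f j m.1 * MvPowerSeries.coeff (R := ℂ) d (∏ i, f i ^ (m.1 : Fin n →₀ ℕ) i))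
        / (l j - lam l d)
    else if d = Finsupp.single j 1 then 1 else 0
  termination_by d => deg d
  decreasing_by
    have hm := m.2
    simp only [Finset.mem_filter] at hm
    exact hm.2

lemma c_zero (j : Fin n) : c l f j 0 = 0 := by
  rw [c]
  rw [if_neg (by rw [deg_zero]; omega),
    if_neg (fun h => one_ne_zero (Finsupp.single_eq_zero.mp h.symm))]

lemma c_single (i j : Fin n) :
    c l f j (Finsupp.single i 1) = if i = j then 1 else 0 := by
  rw [c]
  rw [if_neg (by rw [deg_single]; omega)]
  simp [Finsupp.single_left_inj (one_ne_zero (α := ℕ))]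

lemma c_high (j : Fin n) (d : Fin n →₀ ℕ) (hd : 2 ≤ deg d) :
    c l f j d =
      (∑ m ∈ (Finset.Iic (Finsupp.equivFunOnFinite.symm fun _ : Fin n => deg d)).filter
          (fun m => deg m < deg d),
        c l f j m * MvPowerSeries.coeff (R := ℂ) d (∏ i, f i ^ m i))
        / (l j - lam l d) := by
  rw [c, if_pos hd]
  congr 1
  exact Finset.sum_attach _ fun m => c l f j m * MvPowerSeries.coeff (R := ℂ) d (∏ i, f i ^ m i)
lemma mem_Iio_N {d m : Fin n →₀ ℕ} (j : Fin n) (h : deg m ≤ deg d) :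
    m ∈ Finset.Iio (Finsupp.equivFunOnFinite.symm fun _ : Fin n => deg d + 1) := by
  rw [Finset.mem_Iio, lt_iff_le_and_ne]
  constructor
  · rw [Finsupp.le_def]
    intro i
    simp only [Finsupp.coe_equivFunOnFinite_symm]
    have := apply_le_deg m i
    omega
  · intro hc
    have : m j = deg d + 1 := by
      rw [hc]; simp
    have := apply_le_deg m j
    omega

lemma mem_Iic_D {d m : Fin n →₀ ℕ} (h : deg m ≤ deg d) :
    m ∈ Finset.Iic (Finsupp.equivFunOnFinite.symm fun _ : Fin n => deg d) := by
  rw [Finset.mem_Iic, Finsupp.le_def]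
  intro i
  simp only [Finsupp.coe_equivFunOnFinite_symm]
  have := apply_le_deg m i
  omega

variable (hres : ∀ k : Fin n →₀ ℕ, 2 ≤ k.sum (fun _ v => v) →
      ∀ j : Fin n, (∏ i : Fin n, l i ^ k i) ≠ l j)

include hres hf0 hflin in
lemma coeff_comp (j : Fin n) (d : Fin n →₀ ℕ) :
    MvPowerSeries.coeff (R := ℂ) d (germComp (c l f j : MvPowerSeries (Fin n) ℂ) f)
      = l j * c l f j d := by
  classical
  refine (germComp_coeff f (c l f j) d).trans ?_
  have hφ : ∀ m, MvPowerSeries.coeff (R := ℂ) m (c l f j : MvPowerSeries (Fin n) ℂ)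
      = c l f j m := fun m => rfl
  rw [← Finset.sum_filter_add_sum_filter_not
    (Finset.Iio (Finsupp.equivFunOnFinite.symm fun _ : Fin n => deg d + 1))
    (fun m => deg m < deg d)]
  -- the high-degree part contributes `lam l d * c l f j d`
  have h2 : ∑ m ∈ (Finset.Iio (Finsupp.equivFunOnFinite.symm fun _ : Fin n => deg d + 1)).filter
        (fun m => ¬ deg m < deg d),
      MvPowerSeries.coeff (R := ℂ) m (c l f j : MvPowerSeries (Fin n) ℂ)
        * MvPowerSeries.coeff (R := ℂ) d (∏ i, f i ^ m i)
      = lam l d * c l f j d := by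
    have hcongr : ∀ m ∈ (Finset.Iio
          (Finsupp.equivFunOnFinite.symm fun _ : Fin n => deg d + 1)).filter
          (fun m => ¬ deg m < deg d),
        MvPowerSeries.coeff (R := ℂ) m (c l f j : MvPowerSeries (Fin n) ℂ)
          * MvPowerSeries.coeff (R := ℂ) d (∏ i, f i ^ m i)
        = if m = d then lam l d * c l f j d else 0 := by
      intro m hm
      rw [Finset.mem_filter] at hm
      have hdm : deg d ≤ deg m := Nat.le_of_not_lt hm.2
      rw [coeff_prod_pow l f hf0 hflin (deg m) m d le_rfl hdm, hφ]
      rcases eq_or_ne d m with rfl | hne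
      · rw [if_pos rfl, if_pos rfl]; ring
      · rw [if_neg hne, if_neg (Ne.symm hne), mul_zero]
    rw [Finset.sum_congr rfl hcongr, Finset.sum_ite_eq' _ d]
    rw [if_pos]
    rw [Finset.mem_filter]
    exact ⟨mem_Iio_N j le_rfl, by omega⟩
  rw [h2]
  -- the low-degree part equals the numerator in the recursion
  have h1 : ∑ m ∈ (Finset.Iio (Finsupp.equivFunOnFinite.symm fun _ : Fin n => deg d + 1)).filter
        (fun m => deg m < deg d),
      MvPowerSeries.coeff (R := ℂ) m (c l f j : MvPowerSeries (Fin n) ℂ)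
        * MvPowerSeries.coeff (R := ℂ) d (∏ i, f i ^ m i)
      = ∑ m ∈ (Finset.Iic (Finsupp.equivFunOnFinite.symm fun _ : Fin n => deg d)).filter
          (fun m => deg m < deg d),
        c l f j m * MvPowerSeries.coeff (R := ℂ) d (∏ i, f i ^ m i) := by
    apply Finset.sum_congr
    · ext m
      simp only [Finset.mem_filter]
      constructor
      · rintro ⟨-, h⟩; exact ⟨mem_Iic_D (le_of_lt h), h⟩
      · rintro ⟨-, h⟩; exact ⟨mem_Iio_N j (le_of_lt h), h⟩
    · intro m _; rw [hφ]
  rw [h1]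
  set Rv := ∑ m ∈ (Finset.Iic (Finsupp.equivFunOnFinite.symm fun _ : Fin n => deg d)).filter
      (fun m => deg m < deg d),
    c l f j m * MvPowerSeries.coeff (R := ℂ) d (∏ i, f i ^ m i) with hRv
  by_cases h2d : 2 ≤ deg d
  · have hne : l j - lam l d ≠ 0 := by
      have := hres d (by rw [deg_sum]; exact h2d) j
      exact sub_ne_zero.mpr (Ne.symm this)
    have hc : c l f j d * (l j - lam l d) = Rv := by
      rw [c_high l f j d h2d, div_mul_cancel₀ _ hne]
    linear_combination -hc
  · -- low degrees
    have hRv0 : Rv = 0 := by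
      rcases Nat.lt_or_ge (deg d) 1 with h0 | h1d
      · have : ((Finset.Iic (Finsupp.equivFunOnFinite.symm fun _ : Fin n => deg d)).filter
            (fun m => deg m < deg d)) = ∅ := by
          apply Finset.filter_false_of_mem
          intro m _
          omega
        rw [hRv, this, Finset.sum_empty]
      · have hd1 : deg d = 1 := by omega
        have hfil : ((Finset.Iic (Finsupp.equivFunOnFinite.symm fun _ : Fin n => deg d)).filter
            (fun m => deg m < deg d)) = {0} := by
          ext m
          simp only [Finset.mem_filter, Finset.mem_singleton]
          constructor
          · rintro ⟨-, h⟩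
            exact deg_eq_zero (by omega)
          · rintro rfl
            refine ⟨mem_Iic_D (by rw [deg_zero]; omega), by rw [deg_zero]; omega⟩
        rw [hRv, hfil, Finset.sum_singleton, c_zero, zero_mul]
    rw [hRv0, zero_add]
    rcases Nat.lt_or_ge (deg d) 1 with h0 | h1d
    · have hd0 : d = 0 := deg_eq_zero (by omega)
      subst hd0
      rw [c_zero]
      ring
    · have hd1 : deg d = 1 := by omega
      obtain ⟨i, rfl⟩ := deg_eq_one hd1
      rw [lam_single, c_single]
      rcases eq_or_ne i j with rfl | hij
      · simp
      · simp [hij]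


end FLinAux

/-- If `(λ₁,…,λ_n) ∈ (ℂ*)ⁿ` has no resonances then every formal germ
`f : (ℂⁿ,0) → (ℂⁿ,0)` with diagonal linear part `diag(λ₁,…,λ_n)` is formally
linearizable: there is a formal map `φ` with identity linear part conjugating `f` to
its linear part, `φ ∘ f = diag(λ₁,…,λ_n) ∘ φ`. -/
theorem formal_linearization_no_resonances {n : ℕ} (l : Fin n → ℂ)
    (hl0 : ∀ j, l j ≠ 0)
    (hres : ∀ k : Fin n →₀ ℕ, 2 ≤ k.sum (fun _ v => v) →
      ∀ j : Fin n, (∏ i : Fin n, l i ^ k i) ≠ l j)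
    (f : Fin n → MvPowerSeries (Fin n) ℂ)
    (hf0 : ∀ j, MvPowerSeries.constantCoeff (σ := Fin n) (R := ℂ) (f j) = 0)
    (hflin : ∀ i j : Fin n, MvPowerSeries.coeff (R := ℂ) (Finsupp.single i 1) (f j)
      = if i = j then l j else 0) :
    ∃ φ : Fin n → MvPowerSeries (Fin n) ℂ,
      (∀ j, MvPowerSeries.constantCoeff (σ := Fin n) (R := ℂ) (φ j) = 0) ∧
      (∀ i j : Fin n, MvPowerSeries.coeff (R := ℂ) (Finsupp.single i 1) (φ j)
        = if i = j then 1 else 0) ∧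
      (∀ j, germComp (φ j) f = l j • φ j) := by
  classical
  refine ⟨fun j => (FLinAux.c l f j : MvPowerSeries (Fin n) ℂ), ?_, ?_, ?_⟩
  · intro j
    have : MvPowerSeries.coeff (R := ℂ) 0 (FLinAux.c l f j : MvPowerSeries (Fin n) ℂ) = 0 :=
      FLinAux.c_zero l f j
    rwa [MvPowerSeries.coeff_zero_eq_constantCoeff] at this
  · intro i j
    exact FLinAux.c_single l f i j
  · intro j
    apply MvPowerSeries.ext
    intro d
    rw [FLinAux.coeff_comp l f hf0 hflin hres j d]
    rfl
end
end
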